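/- Let r ≥ 2 and s be integers with 2(r-1)^2 ≤ s < (2r-1)(r-1), and let G = (K_r ⊕ K_r) ∨ K_s be the graph of order n = 2r + s. Then μ(G) < n - 2 while γ(G) ≥ 2(n-2). -/

import Mathlib

open scoped Classical
open Sum Finset Matrix

/-- The join of two simple graphs: their disjoint union together with all edges
between the two parts. -/
def SimpleGraph.join {α β : Type*} (G : SimpleGraph α) (H : SimpleGraph β) :
    SimpleGraph (α ⊕ β) where
  Adj x y := (G.sum H).Adj x y ∨ (x.isLeft ∧ y.isRight) ∨ (x.isRight ∧ y.isLeft)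
  symm := by
    constructor
    rintro x y (h | ⟨h1, h2⟩ | ⟨h1, h2⟩)
    · exact Or.inl ((G.sum H).symm.symm _ _ h)
    · exact Or.inr (Or.inr ⟨h2, h1⟩)
    · exact Or.inr (Or.inl ⟨h2, h1⟩)
  loopless := by
    constructor
    rintro x (h | ⟨h1, h2⟩ | ⟨h1, h2⟩)
    · exact (G.sum H).loopless.irrefl x h
    · cases x <;> simp_all
    · cases x <;> simp_all

/-- The graph (K_r ⊕ K_r) ∨ K_s. -/
def exGraph (r s : ℕ) : SimpleGraph ((Fin r ⊕ Fin r) ⊕ Fin s) :=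
  SimpleGraph.join ((SimpleGraph.completeGraph (Fin r)).sum (SimpleGraph.completeGraph (Fin r)))
    (SimpleGraph.completeGraph (Fin s))

section helpers
variable {r s : ℕ}

lemma adj_ll (i j : Fin r) : (exGraph r s).Adj (inl (inl i)) (inl (inl j)) ↔ i ≠ j := by
  simp [exGraph, SimpleGraph.join, SimpleGraph.completeGraph]

lemma adj_lr (i j : Fin r) : ¬ (exGraph r s).Adj (inl (inl i)) (inl (inr j)) := by
  simp [exGraph, SimpleGraph.join, SimpleGraph.completeGraph]

lemma adj_rl (i j : Fin r) : ¬ (exGraph r s).Adj (inl (inr i)) (inl (inl j)) := by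
  simp [exGraph, SimpleGraph.join, SimpleGraph.completeGraph]

lemma adj_rr (i j : Fin r) : (exGraph r s).Adj (inl (inr i)) (inl (inr j)) ↔ i ≠ j := by
  simp [exGraph, SimpleGraph.join, SimpleGraph.completeGraph]

lemma adj_ls (i : Fin r ⊕ Fin r) (j : Fin s) : (exGraph r s).Adj (inl i) (inr j) := by
  simp [exGraph, SimpleGraph.join]

lemma adj_sl (i : Fin r ⊕ Fin r) (j : Fin s) : (exGraph r s).Adj (inr j) (inl i) := by
  simp [exGraph, SimpleGraph.join]

lemma adj_ss (i j : Fin s) : (exGraph r s).Adj (inr i) (inr j) ↔ i ≠ j := by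
  simp [exGraph, SimpleGraph.join, SimpleGraph.completeGraph]

lemma sum_ite_ne {n : ℕ} (g : Fin n → ℝ) (i : Fin n) :
    ∑ a, (if i = a then (0:ℝ) else g a) = (∑ a, g a) - g i := by
  have h : ∀ a ∈ Finset.univ, (if i = a then (0:ℝ) else g a)
      = g a - (if i = a then g a else 0) := by
    intro a _; split <;> simp_all
  rw [Finset.sum_congr rfl h, Finset.sum_sub_distrib, Finset.sum_ite_eq]
  simp

lemma mv_ll (f : (Fin r ⊕ Fin r) ⊕ Fin s → ℝ) (i : Fin r) :
    ((exGraph r s).adjMatrix ℝ).mulVec f (inl (inl i)) =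
      (∑ a, f (inl (inl a))) - f (inl (inl i)) + ∑ j, f (inr j) := by
  simp only [Matrix.mulVec, dotProduct, SimpleGraph.adjMatrix_apply, ite_mul, one_mul,
    zero_mul, Fintype.sum_sum_type, adj_ll, adj_lr, adj_ls, ite_not, if_true, if_false]
  rw [sum_ite_ne (fun a => f (inl (inl a))) i]
  simp

lemma mv_lr (f : (Fin r ⊕ Fin r) ⊕ Fin s → ℝ) (i : Fin r) :
    ((exGraph r s).adjMatrix ℝ).mulVec f (inl (inr i)) =
      (∑ a, f (inl (inr a))) - f (inl (inr i)) + ∑ j, f (inr j) := by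
  simp only [Matrix.mulVec, dotProduct, SimpleGraph.adjMatrix_apply, ite_mul, one_mul,
    zero_mul, Fintype.sum_sum_type, adj_rr, adj_rl, adj_ls, ite_not, if_true, if_false]
  rw [sum_ite_ne (fun a => f (inl (inr a))) i]
  simp

lemma mv_s (f : (Fin r ⊕ Fin r) ⊕ Fin s → ℝ) (j : Fin s) :
    ((exGraph r s).adjMatrix ℝ).mulVec f (inr j) =
      (∑ a, f (inl (inl a))) + (∑ a, f (inl (inr a))) + ((∑ k, f (inr k)) - f (inr j)) := by
  simp only [Matrix.mulVec, dotProduct, SimpleGraph.adjMatrix_apply, ite_mul, one_mul,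
    zero_mul, Fintype.sum_sum_type, adj_ss, adj_sl, ite_not, if_true, if_false]
  rw [sum_ite_ne (fun k => f (inr k)) j]

lemma deg_ll (i : Fin r) : ((exGraph r s).degree (inl (inl i)) : ℝ) = (r:ℝ) - 1 + s := by
  have h := SimpleGraph.adjMatrix_mulVec_const_apply (G := exGraph r s) (α := ℝ) (a := 1)
    (v := inl (inl i))
  rw [mv_ll] at h
  simp [Function.const] at h
  linarith

lemma deg_lr (i : Fin r) : ((exGraph r s).degree (inl (inr i)) : ℝ) = (r:ℝ) - 1 + s := by
  have h := SimpleGraph.adjMatrix_mulVec_const_apply (G := exGraph r s) (α := ℝ) (a := 1)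
    (v := inl (inr i))
  rw [mv_lr] at h
  simp [Function.const] at h
  linarith

lemma deg_s (j : Fin s) : ((exGraph r s).degree (inr j) : ℝ) = 2*(r:ℝ) + s - 1 := by
  have h := SimpleGraph.adjMatrix_mulVec_const_apply (G := exGraph r s) (α := ℝ) (a := 1)
    (v := inr j)
  rw [mv_s] at h
  simp [Function.const] at h
  linarith

end helpers

/-- For r ≥ 2 and 2(r-1)² ≤ s < (2r-1)(r-1), the graph G = (K_r ⊕ K_r) ∨ K_s of order
n = 2r + s satisfies μ(G) < n - 2 while γ(G) ≥ 2(n-2). -/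
theorem exGraph_spectral (r s : ℕ) (hr : 2 ≤ r)
    (hs1 : 2 * (r - 1) ^ 2 ≤ s) (hs2 : s < (2 * r - 1) * (r - 1)) (μ γ : ℝ)
    (hμ : IsGreatest {x : ℝ | ∃ f : (Fin r ⊕ Fin r) ⊕ Fin s → ℝ, f ≠ 0 ∧
      ((exGraph r s).adjMatrix ℝ).mulVec f = x • f} μ)
    (hγ : IsGreatest {x : ℝ | ∃ f : (Fin r ⊕ Fin r) ⊕ Fin s → ℝ, f ≠ 0 ∧
      (Matrix.diagonal (fun v => ((exGraph r s).degree v : ℝ)) +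
        (exGraph r s).adjMatrix ℝ).mulVec f = x • f} γ) :
    μ < (2 * r + s : ℝ) - 2 ∧ 2 * ((2 * r + s : ℝ) - 2) ≤ γ := by
  have h1r : 1 ≤ r := le_trans one_le_two hr
  have hrR : (2:ℝ) ≤ (r:ℝ) := by exact_mod_cast hr
  have hs1R : 2 * ((r:ℝ) - 1)^2 ≤ (s:ℝ) := by
    have h := (Nat.cast_le (α := ℝ)).2 hs1
    push_cast [Nat.cast_sub h1r] at h
    linarith
  have hs2R : (s:ℝ) < (2*(r:ℝ) - 1) * ((r:ℝ) - 1) := by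
    have h := (Nat.cast_lt (α := ℝ)).2 hs2
    push_cast [Nat.cast_sub h1r, Nat.cast_sub (show 1 ≤ 2*r by omega)] at h
    linarith
  have hsR : (2:ℝ) ≤ (s:ℝ) := by nlinarith
  constructor
  · -- adjacency bound
    by_contra hcon
    push_neg at hcon
    obtain ⟨f, hf0, hf⟩ := hμ.1
    set S1 : ℝ := ∑ a, f (inl (inl a)) with hS1
    set S2 : ℝ := ∑ a, f (inl (inr a)) with hS2
    set S3 : ℝ := ∑ j, f (inr j) with hS3
    have hμpos : 0 < μ + 1 := by linarith
    have eqll : ∀ i : Fin r, (μ + 1) * f (inl (inl i)) = S1 + S3 := by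
      intro i
      have h := congrFun hf (inl (inl i))
      rw [mv_ll] at h
      simp only [Pi.smul_apply, smul_eq_mul] at h
      linarith
    have eqlr : ∀ i : Fin r, (μ + 1) * f (inl (inr i)) = S2 + S3 := by
      intro i
      have h := congrFun hf (inl (inr i))
      rw [mv_lr] at h
      simp only [Pi.smul_apply, smul_eq_mul] at h
      linarith
    have eqs : ∀ j : Fin s, (μ + 1) * f (inr j) = S1 + S2 + S3 := by
      intro j
      have h := congrFun hf (inr j)
      rw [mv_s] at h
      simp only [Pi.smul_apply, smul_eq_mul] at h
      linarith
    have sumeq : ∀ (g : Fin r → ℝ) (c : ℝ), (∀ i, g i = c) → ∑ i, g i = r * c := by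
      intro g c hg
      rw [Finset.sum_congr rfl (fun i _ => hg i), Finset.sum_const, Finset.card_univ,
        Fintype.card_fin, nsmul_eq_mul]
    have sumeqs : ∀ (g : Fin s → ℝ) (c : ℝ), (∀ i, g i = c) → ∑ i, g i = s * c := by
      intro g c hg
      rw [Finset.sum_congr rfl (fun i _ => hg i), Finset.sum_const, Finset.card_univ,
        Fintype.card_fin, nsmul_eq_mul]
    have E1 : (μ + 1) * S1 = r * (S1 + S3) := by
      rw [hS1, Finset.mul_sum]
      exact sumeq _ _ fun i => eqll i
    have E2 : (μ + 1) * S2 = r * (S2 + S3) := by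
      rw [hS2, Finset.mul_sum]
      exact sumeq _ _ fun i => eqlr i
    have E3 : (μ + 1) * S3 = s * (S1 + S2 + S3) := by
      rw [hS3, Finset.mul_sum]
      exact sumeqs _ _ fun j => eqs j
    have hμr : 0 < μ + 1 - r := by linarith
    have hμs : 0 < μ + 1 - s := by nlinarith
    have hrpos : (0:ℝ) < r := by linarith
    have hspos : (0:ℝ) < s := by linarith
    have e1 : (μ + 1 - r) * S1 = r * S3 := by linear_combination E1
    have e2 : (μ + 1 - r) * S2 = r * S3 := by linear_combination E2
    have hS12 : S1 = S2 := by
      have h0 : (μ + 1 - r) * (S1 - S2) = 0 := by linear_combination e1 - e2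
      rcases mul_eq_zero.1 h0 with h | h
      · linarith
      · linarith
    have e3 : (μ + 1 - s) * S3 = 2 * s * S1 := by
      linear_combination E3 - (s:ℝ) * hS12
    -- nondegeneracy
    have hzero : S1 = 0 → False := by
      intro h10
      have h30 : S3 = 0 := by
        have : (r:ℝ) * S3 = 0 := by rw [← e1, h10, mul_zero]
        exact (mul_eq_zero.1 this).resolve_left hrpos.ne'
      have h20 : S2 = 0 := hS12 ▸ h10
      apply hf0
      funext v
      have hz : ∀ w : ℝ, (μ + 1) * w = 0 → w = 0 := fun w hw =>
        (mul_eq_zero.1 hw).resolve_left hμpos.ne'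
      rcases v with (i | i) | j
      · exact hz _ (by rw [eqll i, h10, h30, add_zero])
      · exact hz _ (by rw [eqlr i, h20, h30, add_zero])
      · exact hz _ (by rw [eqs j, h10, h20, h30]; ring)
    have hS1ne : S1 ≠ 0 := fun h => hzero h
    have hS3ne : S3 ≠ 0 := by
      intro h30
      apply hzero
      have : (μ + 1 - r) * S1 = 0 := by rw [e1, h30, mul_zero]
      exact (mul_eq_zero.1 this).resolve_left hμr.ne'
    -- the quadratic relation
    have key : (μ + 1 - r) * (μ + 1 - s) = 2 * r * s := by
      have hmul : ((μ + 1 - r) * (μ + 1 - s)) * (S1 * S3) = (2 * r * s) * (S1 * S3) := by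
        calc ((μ + 1 - r) * (μ + 1 - s)) * (S1 * S3)
            = ((μ + 1 - r) * S1) * ((μ + 1 - s) * S3) := by ring
          _ = (r * S3) * (2 * s * S1) := by rw [e1, e3]
          _ = (2 * r * s) * (S1 * S3) := by ring
      exact mul_right_cancel₀ (mul_ne_zero hS1ne hS3ne) hmul
    -- contradiction
    have hA : (r:ℝ) + s - 1 ≤ μ + 1 - r := by linarith
    have hB : 2*(r:ℝ) - 1 ≤ μ + 1 - s := by linarith
    have hprod : ((r:ℝ) + s - 1) * (2*(r:ℝ) - 1) ≤ (μ + 1 - r) * (μ + 1 - s) :=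
      mul_le_mul hA hB (by linarith) (by linarith)
    nlinarith [hprod, key, hs2R]
  · -- signless Laplacian bound
    set q : ℝ := Real.sqrt ((s:ℝ)^2 + 8*r*s) with hq
    have hq0 : 0 ≤ q := Real.sqrt_nonneg _
    have hq2 : q^2 = (s:ℝ)^2 + 8*r*s := Real.sq_sqrt (by positivity)
    have hqge : 4*(r:ℝ) + s - 4 ≤ q := by
      nlinarith [hq2, hq0, hs1R, sq_nonneg (q - (4*(r:ℝ) + s - 4)), sq_nonneg (q + (4*(r:ℝ) + s - 4))]
    obtain ⟨x, h2x⟩ : ∃ x : ℝ, 2*x = (4*(r:ℝ) + 3*s - 4) + q := ⟨((4*(r:ℝ) + 3*s - 4) + q)/2, by ring⟩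
    have hmem : x ∈ {x : ℝ | ∃ f : (Fin r ⊕ Fin r) ⊕ Fin s → ℝ, f ≠ 0 ∧
        (Matrix.diagonal (fun v => ((exGraph r s).degree v : ℝ)) +
          (exGraph r s).adjMatrix ℝ).mulVec f = x • f} := by
      refine ⟨fun v => Sum.elim (fun _ => (s:ℝ)) (fun _ => x - (2*(r:ℝ)+s-2)) v, ?_, ?_⟩
      · intro h0
        have := congrFun h0 (inl (inl ⟨0, by omega⟩))
        simp at this
        exact absurd (by exact_mod_cast this : (s:ℝ) = 0) (by linarith)
      · funext v
        rw [Matrix.add_mulVec, Pi.add_apply, Matrix.mulVec_diagonal, Pi.smul_apply,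
          smul_eq_mul]
        rcases v with (i | i) | j
        · rw [mv_ll, deg_ll]
          simp only [Sum.elim_inl, Sum.elim_inr, Finset.sum_const, Finset.card_univ,
            Fintype.card_fin, nsmul_eq_mul]
          ring
        · rw [mv_lr, deg_lr]
          simp only [Sum.elim_inl, Sum.elim_inr, Finset.sum_const, Finset.card_univ,
            Fintype.card_fin, nsmul_eq_mul]
          ring
        · rw [mv_s, deg_s]
          simp only [Sum.elim_inl, Sum.elim_inr, Finset.sum_const, Finset.card_univ,
            Fintype.card_fin, nsmul_eq_mul]
          linear_combination (-(2*x - (4*(r:ℝ)+3*(s:ℝ)-4) + q)/4) * h2x - (1/4) * hq2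
    have hxγ : x ≤ γ := hγ.2 hmem
    have : 2 * ((2*(r:ℝ) + s) - 2) ≤ x := by linarith
    linarith
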